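/- Let (a,b) be initial data in the energy space, let n > k be positive integers, let v^n be the Galerkin approximation of order n, and set φ(t) = Σ_{i=1}^k λ_i² v^n_i(t)². Then |φ'(t)| ≤ (H₀/ν₁)·λ_k for every t ≥ 0, where H₀ = Σ_i b_i² + M(Σ_i λ_i² a_i²) and ν₁ = min{1, μ₁}. -/

import Mathlib

open Filter Set

/-- Derivative from within the half line `[0, ∞)`. -/
noncomputable def derIci (f : ℝ → ℝ) : ℝ → ℝ := derivWithin f (Set.Ici (0 : ℝ))

/-- The pair `(a, b)` belongs to the energy space `D(A^{1/2}) × H`. -/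
def InEnergy (lam a b : ℕ → ℝ) : Prop :=
  Summable fun i => (b i) ^ 2 + (lam i) ^ 2 * (a i) ^ 2

/-- `R_k(a,b) = Σ_{i>k} (b_i² + λ_i² a_i²)`. -/
noncomputable def Rk (lam a b : ℕ → ℝ) (k : ℕ) : ℝ :=
  ∑' i : ℕ, if k < i then (b i) ^ 2 + (lam i) ^ 2 * (a i) ^ 2 else 0

/-- Lacunary (spectral gap) data: `R_k(a,b)·k²·exp(k λ_k) ≤ 1` for infinitely many
positive integers `k`. -/
def Lacunary (lam a b : ℕ → ℝ) : Prop :=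
  InEnergy lam a b ∧
    {k : ℕ | 0 < k ∧
      Rk lam a b k * (k : ℝ) ^ 2 * Real.exp ((k : ℝ) * lam k) ≤ 1}.Infinite

/-- `M(σ) = ∫₀^σ m(s) ds`. -/
noncomputable def Mfun (m : ℝ → ℝ) (σ : ℝ) : ℝ := ∫ s in (0:ℝ)..σ, m s

/-- The conserved quantity `H₀ = Σ_i b_i² + M(Σ_i λ_i² a_i²)`. -/
noncomputable def H0 (lam : ℕ → ℝ) (m : ℝ → ℝ) (a b : ℕ → ℝ) : ℝ :=
  (∑' i, (b i) ^ 2) + Mfun m (∑' i, (lam i) ^ 2 * (a i) ^ 2)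

/-- Galerkin approximation of order `n` (components of index `> n` extended by zero):
the solution of `v_i'' + m(Σ_{j≤n} λ_j² v_j²) λ_i² v_i = 0` for `i ≤ n`, with
`v_i(0) = a_i`, `v_i'(0) = b_i`. -/
def GalerkinSol (lam : ℕ → ℝ) (m : ℝ → ℝ) (a b : ℕ → ℝ) (n : ℕ)
    (v : ℕ → ℝ → ℝ) : Prop :=
  (∀ i, ContDiffOn ℝ 2 (v i) (Set.Ici 0)) ∧
  (∀ i ≤ n, v i 0 = a i) ∧
  (∀ i ≤ n, derIci (v i) 0 = b i) ∧
  (∀ i, n < i → ∀ t, v i t = 0) ∧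
  (∀ i ≤ n, ∀ t, 0 ≤ t →
    derIci (derIci (v i)) t
      + m (∑ j ∈ Finset.range (n + 1), (lam j) ^ 2 * (v j t) ^ 2)
        * (lam i) ^ 2 * v i t = 0)

/-- Global weak solution with initial data `(a,b)`: a family `v_i ∈ C²([0,∞))` with
`v_i(0) = a_i`, `v_i'(0) = b_i`, such that `Σ v_i'(t)²` and `Σ λ_i² v_i(t)²` converge,
the maps `t ↦ (v_i'(t))_i` and `t ↦ (λ_i v_i(t))_i` are continuous from `[0,∞)` into
`ℓ²`, and `v_i'' + m(Σ_j λ_j² v_j²) λ_i² v_i = 0` for every `i` and every `t ≥ 0`. -/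
def WeakSol (lam : ℕ → ℝ) (m : ℝ → ℝ) (a b : ℕ → ℝ) (v : ℕ → ℝ → ℝ) : Prop :=
  (∀ i, ContDiffOn ℝ 2 (v i) (Set.Ici 0)) ∧
  (∀ i, v i 0 = a i) ∧
  (∀ i, derIci (v i) 0 = b i) ∧
  (∀ t, 0 ≤ t → Summable fun i => (derIci (v i) t) ^ 2) ∧
  (∀ t, 0 ≤ t → Summable fun i => (lam i) ^ 2 * (v i t) ^ 2) ∧
  (∀ t₀, 0 ≤ t₀ → Tendsto (fun t => ∑' i, (derIci (v i) t - derIci (v i) t₀) ^ 2)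
      (nhdsWithin t₀ (Set.Ici 0)) (nhds 0)) ∧
  (∀ t₀, 0 ≤ t₀ → Tendsto (fun t => ∑' i, (lam i) ^ 2 * (v i t - v i t₀) ^ 2)
      (nhdsWithin t₀ (Set.Ici 0)) (nhds 0)) ∧
  (∀ i, ∀ t, 0 ≤ t →
    derIci (derIci (v i)) t
      + m (∑' j, (lam j) ^ 2 * (v j t) ^ 2) * (lam i) ^ 2 * v i t = 0)

section Aux

open MeasureTheory intervalIntegral

lemma Mfun_hasDerivWithinAt {m : ℝ → ℝ} (hm : ContinuousOn m (Set.Ici 0))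
    {σ : ℝ} (hσ : 0 ≤ σ) : HasDerivWithinAt (Mfun m) (m σ) (Set.Ici 0) σ := by
  have hsub : Set.uIcc (0:ℝ) σ ⊆ Set.Ici 0 := by
    rw [Set.uIcc_of_le hσ]; exact Set.Icc_subset_Ici_self
  have hint : IntervalIntegrable m volume 0 σ := (hm.mono hsub).intervalIntegrable
  rcases eq_or_lt_of_le hσ with h0 | h0
  · subst h0
    exact integral_hasDerivWithinAt_right hint
      ((hm.mono (Set.Ioi_subset_Ici le_rfl)).stronglyMeasurableAtFilter_nhdsWithin
        measurableSet_Ioi 0)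
      ((hm 0 Set.self_mem_Ici).mono (Set.Ioi_subset_Ici le_rfl))
  · have hc : ContinuousAt m σ := hm.continuousAt (Ici_mem_nhds h0)
    exact (integral_hasDerivAt_right hint
      ⟨Set.Ici 0, Ici_mem_nhds h0, hm.aestronglyMeasurable measurableSet_Ici⟩ hc).hasDerivWithinAt

lemma Mfun_mono {m : ℝ → ℝ} (hm : ContinuousOn m (Set.Ici 0))
    (hnn : ∀ s, 0 ≤ s → 0 ≤ m s) {σ₁ σ₂ : ℝ} (h1 : 0 ≤ σ₁) (h12 : σ₁ ≤ σ₂) :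
    Mfun m σ₁ ≤ Mfun m σ₂ := by
  have hsub : ∀ {x y : ℝ}, 0 ≤ x → x ≤ y → Set.uIcc x y ⊆ Set.Ici 0 := by
    intro x y hx hxy
    rw [Set.uIcc_of_le hxy]
    exact fun z hz => le_trans hx hz.1
  have hint1 : IntervalIntegrable m volume 0 σ₁ := (hm.mono (hsub le_rfl h1)).intervalIntegrable
  have hint2 : IntervalIntegrable m volume σ₁ σ₂ := (hm.mono (hsub h1 h12)).intervalIntegrable
  have key : Mfun m σ₁ + ∫ s in σ₁..σ₂, m s = Mfun m σ₂ :=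
    integral_add_adjacent_intervals hint1 hint2
  have hpos : 0 ≤ ∫ s in σ₁..σ₂, m s :=
    integral_nonneg h12 (fun u hu => hnn u (le_trans h1 hu.1))
  linarith

lemma Mfun_lb {m : ℝ → ℝ} (hm : ContinuousOn m (Set.Ici 0)) {μ₁ : ℝ}
    (hlb : ∀ s, 0 ≤ s → μ₁ ≤ m s) {σ : ℝ} (hσ : 0 ≤ σ) : μ₁ * σ ≤ Mfun m σ := by
  have hsub : Set.uIcc (0:ℝ) σ ⊆ Set.Ici 0 := by
    rw [Set.uIcc_of_le hσ]; exact Set.Icc_subset_Ici_self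
  have hint : IntervalIntegrable m volume 0 σ := (hm.mono hsub).intervalIntegrable
  have h1 : (∫ _ in (0:ℝ)..σ, μ₁) ≤ ∫ s in (0:ℝ)..σ, m s :=
    integral_mono_on hσ intervalIntegrable_const hint (fun u hu => hlb u hu.1)
  rw [intervalIntegral.integral_const, smul_eq_mul, sub_zero] at h1
  calc μ₁ * σ = σ * μ₁ := by ring
  _ ≤ Mfun m σ := h1

end Aux

/-- bound on the time derivative of the low-frequency part
φ(t) = Σ_{i≤k} λ_i² v_i(t)² of a Galerkin approximation. -/
theorem stmt7 (lam : ℕ → ℝ) (hpos : ∀ i, 0 < lam i) (hmono : Monotone lam)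
    (htop : Tendsto lam atTop atTop)
    (μ₁ : ℝ) (hμ₁ : 0 < μ₁) (m : ℝ → ℝ)
    (hm_reg : ContDiffOn ℝ 1 m (Set.Ici 0))
    (hm_lb : ∀ σ, 0 ≤ σ → μ₁ ≤ m σ)
    (a b : ℕ → ℝ) (hab : InEnergy lam a b)
    (k n : ℕ) (hk : 0 < k) (hkn : k < n)
    (v : ℕ → ℝ → ℝ) (hv : GalerkinSol lam m a b n v)
    (φ : ℝ → ℝ)
    (hφ : ∀ t, φ t = ∑ i ∈ Finset.range (k + 1), (lam i) ^ 2 * (v i t) ^ 2) :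
    ∀ t, 0 ≤ t → |derIci φ t| ≤ (H0 lam m a b / min 1 μ₁) * lam k := by
  classical
  obtain ⟨hreg, hva, hvb, hzero, hode⟩ := hv
  set D : ℕ → ℝ → ℝ := fun i => derIci (v i) with hD
  have hm_cont : ContinuousOn m (Set.Ici 0) := hm_reg.continuousOn
  have hudiff : UniqueDiffOn ℝ (Set.Ici (0:ℝ)) := uniqueDiffOn_Ici 0
  -- derivatives of v i and D i
  have hv' : ∀ i, ∀ t ∈ Set.Ici (0:ℝ), HasDerivWithinAt (v i) (D i t) (Set.Ici 0) t := by
    intro i t ht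
    exact (((hreg i).differentiableOn (by norm_num)) t ht).hasDerivWithinAt
  have hDreg : ∀ i, ContDiffOn ℝ 1 (D i) (Set.Ici 0) := by
    intro i
    exact (hreg i).derivWithin hudiff (by norm_num)
  have hD' : ∀ i, ∀ t ∈ Set.Ici (0:ℝ),
      HasDerivWithinAt (D i) (derIci (D i) t) (Set.Ici 0) t := by
    intro i t ht
    exact (((hDreg i).differentiableOn (by norm_num)) t ht).hasDerivWithinAt
  -- the nonlinearity argument
  set w : ℝ → ℝ := fun t => ∑ j ∈ Finset.range (n + 1), (lam j) ^ 2 * (v j t) ^ 2 with hwdef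
  have hwnn : ∀ t, 0 ≤ w t := by
    intro t
    exact Finset.sum_nonneg fun j _ => mul_nonneg (sq_nonneg _) (sq_nonneg _)
  have hw' : ∀ t ∈ Set.Ici (0:ℝ),
      HasDerivWithinAt w (∑ j ∈ Finset.range (n + 1),
        (lam j) ^ 2 * (2 * v j t * D j t)) (Set.Ici 0) t := by
    intro t ht
    apply HasDerivWithinAt.fun_sum
    intro j _
    have h1 : HasDerivWithinAt (fun s => (v j s) ^ 2)
        ((2:ℕ) * (v j t) ^ 1 * D j t) (Set.Ici 0) t := (hv' j t ht).pow 2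
    have h2 := h1.const_mul ((lam j) ^ 2)
    convert h2 using 1
    · rfl
    push_cast
    ring
  -- the energy
  set E : ℝ → ℝ := fun t =>
    (∑ i ∈ Finset.range (n + 1), (D i t) ^ 2) + Mfun m (w t) with hEdef
  have hE' : ∀ x ∈ Set.Ici (0:ℝ), HasDerivWithinAt E 0 (Set.Ici 0) x := by
    intro x hx
    have h1 : HasDerivWithinAt (fun t => ∑ i ∈ Finset.range (n + 1), (D i t) ^ 2)
        (∑ i ∈ Finset.range (n + 1), 2 * D i x * derIci (D i) x) (Set.Ici 0) x := by
      apply HasDerivWithinAt.fun_sum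
      intro i _
      have h := (hD' i x hx).fun_pow 2
      convert h using 1
      · rfl
      push_cast
      ring
    have h2 : HasDerivWithinAt (fun t => Mfun m (w t))
        (m (w x) * (∑ j ∈ Finset.range (n + 1), (lam j) ^ 2 * (2 * v j x * D j x)))
        (Set.Ici 0) x := by
      have := (Mfun_hasDerivWithinAt hm_cont (hwnn x)).comp x (hw' x hx)
        (fun t _ => hwnn t)
      exact this
    have hsum := h1.add h2
    have heq : (∑ i ∈ Finset.range (n + 1), 2 * D i x * derIci (D i) x)
        + m (w x) * (∑ j ∈ Finset.range (n + 1), (lam j) ^ 2 * (2 * v j x * D j x)) = 0 := by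
      rw [Finset.mul_sum, ← Finset.sum_add_distrib]
      apply Finset.sum_eq_zero
      intro i hi
      have hin : i ≤ n := Nat.lt_succ_iff.mp (Finset.mem_range.mp hi)
      have hODE := hode i hin x hx
      have hdd : derIci (D i) x = -(m (w x) * (lam i) ^ 2 * v i x) := by
        simp only [hD, hwdef] at hODE ⊢
        linarith
      rw [hdd]
      ring
    rw [heq] at hsum
    exact hsum
  have hEconst : ∀ t, 0 ≤ t → E t = E 0 := by
    intro t ht
    have hcont : ContinuousOn E (Set.Icc 0 t) := fun x hx =>
      ((hE' x hx.1).continuousWithinAt).mono (Set.Icc_subset_Ici_self)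
    exact constant_of_has_deriv_right_zero hcont
      (fun x hx => (hE' x hx.1).mono (Set.Ici_subset_Ici.mpr hx.1)) t
      (Set.mem_Icc.mpr ⟨ht, le_rfl⟩)
  -- summability of the initial data pieces
  have hnn1 : ∀ i, (0:ℝ) ≤ (b i) ^ 2 := fun i => sq_nonneg _
  have hnn2 : ∀ i, (0:ℝ) ≤ (lam i) ^ 2 * (a i) ^ 2 :=
    fun i => mul_nonneg (sq_nonneg _) (sq_nonneg _)
  have hsb : Summable fun i => (b i) ^ 2 :=
    Summable.of_nonneg_of_le hnn1 (fun i => le_add_of_nonneg_right (hnn2 i)) hab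
  have hsa : Summable fun i => (lam i) ^ 2 * (a i) ^ 2 :=
    Summable.of_nonneg_of_le hnn2 (fun i => le_add_of_nonneg_left (hnn1 i)) hab
  have hmnn : ∀ s, 0 ≤ s → 0 ≤ m s := fun s hs => le_trans hμ₁.le (hm_lb s hs)
  -- E 0 ≤ H0
  have hE0 : E 0 ≤ H0 lam m a b := by
    have hb0 : ∀ i ∈ Finset.range (n + 1), D i 0 = b i := by
      intro i hi
      exact hvb i (Nat.lt_succ_iff.mp (Finset.mem_range.mp hi))
    have ha0 : ∀ i ∈ Finset.range (n + 1), (lam i) ^ 2 * (v i 0) ^ 2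
        = (lam i) ^ 2 * (a i) ^ 2 := by
      intro i hi
      rw [hva i (Nat.lt_succ_iff.mp (Finset.mem_range.mp hi))]
    have h1 : (∑ i ∈ Finset.range (n + 1), (D i 0) ^ 2) ≤ ∑' i, (b i) ^ 2 := by
      rw [Finset.sum_congr rfl (fun i hi => by rw [hb0 i hi])]
      exact Summable.sum_le_tsum _ (fun i _ => hnn1 i) hsb
    have h2 : w 0 ≤ ∑' i, (lam i) ^ 2 * (a i) ^ 2 := by
      rw [hwdef]
      simp only
      rw [Finset.sum_congr rfl ha0]
      exact Summable.sum_le_tsum _ (fun i _ => hnn2 i) hsa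
    have h3 : Mfun m (w 0) ≤ Mfun m (∑' i, (lam i) ^ 2 * (a i) ^ 2) :=
      Mfun_mono hm_cont hmnn (hwnn 0) h2
    simp only [hEdef, H0]
    linarith
  -- the coercivity constant
  set ν : ℝ := min 1 μ₁ with hνdef
  have hν : 0 < ν := lt_min one_pos hμ₁
  have hν1 : ν ≤ 1 := min_le_left _ _
  have hνμ : ν ≤ μ₁ := min_le_right _ _
  intro t ht
  -- the "total energy at t" quantity
  set S : ℝ := ∑ i ∈ Finset.range (n + 1), ((D i t) ^ 2 + (lam i) ^ 2 * (v i t) ^ 2)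
    with hSdef
  have hSsplit : S = (∑ i ∈ Finset.range (n + 1), (D i t) ^ 2) + w t := by
    rw [hSdef, hwdef, Finset.sum_add_distrib]
  have hDsum_nn : 0 ≤ ∑ i ∈ Finset.range (n + 1), (D i t) ^ 2 :=
    Finset.sum_nonneg fun i _ => sq_nonneg _
  have hMlb : μ₁ * w t ≤ Mfun m (w t) := Mfun_lb hm_cont hm_lb (hwnn t)
  have hcoer : ν * S ≤ E t := by
    rw [hSsplit, hEdef]
    have h1 : ν * (∑ i ∈ Finset.range (n + 1), (D i t) ^ 2)
        ≤ ∑ i ∈ Finset.range (n + 1), (D i t) ^ 2 := by nlinarith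
    have h2 : ν * w t ≤ μ₁ * w t := mul_le_mul_of_nonneg_right hνμ (hwnn t)
    simp only
    linarith [hMlb]
  have hSle : S ≤ H0 lam m a b / ν := by
    rw [le_div_iff₀ hν]
    calc S * ν = ν * S := by ring
    _ ≤ E t := hcoer
    _ = E 0 := hEconst t ht
    _ ≤ H0 lam m a b := hE0
  -- derivative of φ
  have hφf : φ = fun s => ∑ i ∈ Finset.range (k + 1), (lam i) ^ 2 * (v i s) ^ 2 :=
    funext hφ
  have hφ' : HasDerivWithinAt φ
      (∑ i ∈ Finset.range (k + 1), (lam i) ^ 2 * (2 * v i t * D i t)) (Set.Ici 0) t := by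
    rw [hφf]
    apply HasDerivWithinAt.fun_sum
    intro i _
    have h1 : HasDerivWithinAt (fun s => (v i s) ^ 2)
        ((2:ℕ) * (v i t) ^ 1 * D i t) (Set.Ici 0) t := (hv' i t ht).pow 2
    have h2 := h1.const_mul ((lam i) ^ 2)
    convert h2 using 1
    · rfl
    push_cast
    ring
  have hder : derIci φ t
      = ∑ i ∈ Finset.range (k + 1), (lam i) ^ 2 * (2 * v i t * D i t) :=
    hφ'.derivWithin (hudiff t ht)
  rw [hder]
  -- per-term bound
  have key : ∀ i ∈ Finset.range (k + 1),
      |(lam i) ^ 2 * (2 * v i t * D i t)|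
        ≤ lam k * ((D i t) ^ 2 + (lam i) ^ 2 * (v i t) ^ 2) := by
    intro i hi
    have hik : lam i ≤ lam k := hmono (Nat.lt_succ_iff.mp (Finset.mem_range.mp hi))
    have h0i := hpos i
    rcases abs_cases ((lam i) ^ 2 * (2 * v i t * D i t)) with ⟨he, _⟩ | ⟨he, _⟩ <;>
      rw [he] <;>
      nlinarith [mul_nonneg h0i.le (sq_nonneg (lam i * v i t - D i t)),
        mul_nonneg h0i.le (sq_nonneg (lam i * v i t + D i t)),
        mul_nonneg (sub_nonneg.mpr hik) (sq_nonneg (lam i * v i t)),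
        mul_nonneg (sub_nonneg.mpr hik) (sq_nonneg (D i t))]
  calc |∑ i ∈ Finset.range (k + 1), (lam i) ^ 2 * (2 * v i t * D i t)|
      ≤ ∑ i ∈ Finset.range (k + 1), |(lam i) ^ 2 * (2 * v i t * D i t)| :=
        Finset.abs_sum_le_sum_abs _ _
    _ ≤ ∑ i ∈ Finset.range (k + 1),
        lam k * ((D i t) ^ 2 + (lam i) ^ 2 * (v i t) ^ 2) :=
        Finset.sum_le_sum key
    _ = lam k * ∑ i ∈ Finset.range (k + 1),
        ((D i t) ^ 2 + (lam i) ^ 2 * (v i t) ^ 2) := by rw [Finset.mul_sum]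
    _ ≤ lam k * S := by
        apply mul_le_mul_of_nonneg_left _ (hpos k).le
        rw [hSdef]
        apply Finset.sum_le_sum_of_subset_of_nonneg
        · exact Finset.range_subset_range.mpr (by omega)
        · intro i _ _
          positivity
    _ ≤ lam k * (H0 lam m a b / ν) := mul_le_mul_of_nonneg_left hSle (hpos k).le
    _ = H0 lam m a b / ν * lam k := by ring
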